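/- arXiv:2405.10007 — 3 statements merged into one kernel-verified Lean document; each statement's English description precedes it below -/
import Mathlib

section
/- Let Ω₁ ∈ (0, π), t ∈ ℝ, g ∈ [Ω₁, π] with e^{igt} = 1, and define E(ω) = e^{iωt} for |ω| ≤ g and E(ω) = e^{igt} = 1 for g < |ω| ≤ π. Let a_k = (1/2π)∫_{−π}^{π} E(ω)e^{−ikω} dω. Then for every ω ∈ [−Ω₁, Ω₁], the series ∑_{k∈ℤ} a_k e^{ikω} converges absolutely to e^{iωt}. -/
open Real

private lemma integral_E (t g : ℝ) (hg0 : 0 < g) (hgπ : g ≤ π)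
    (E : ℝ → ℂ)
    (hEexp : ∀ ω : ℝ, |ω| ≤ g → E ω = Complex.exp (Complex.I * ω * t))
    (hEone : ∀ ω : ℝ, g ≤ |ω| → E ω = 1)
    (hEcont : Continuous E)
    (hexpg : Complex.exp (Complex.I * (g * t)) = 1)
    (k : ℤ) (hk : (k : ℂ) ≠ 0) (hkt : (t : ℂ) ≠ (k : ℂ)) :
    ∫ ω in (-π)..π, E ω * Complex.exp (-Complex.I * k * ω)
      = (Complex.exp (-(Complex.I * k * g)) - Complex.exp (Complex.I * k * g)) * t
          / (Complex.I * k * ((t : ℂ) - (k : ℂ))) := by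
  have hIk : -Complex.I * (k : ℂ) ≠ 0 := by
    simpa using mul_ne_zero Complex.I_ne_zero hk
  have htk : Complex.I * ((t : ℂ) - (k : ℂ)) ≠ 0 :=
    mul_ne_zero Complex.I_ne_zero (sub_ne_zero.2 hkt)
  have hint : ∀ a b : ℝ, IntervalIntegrable
      (fun ω : ℝ => E ω * Complex.exp (-Complex.I * k * ω)) MeasureTheory.volume a b := by
    intro a b
    exact (hEcont.mul ((Complex.continuous_exp).comp
      (continuous_const.mul Complex.continuous_ofReal))).intervalIntegrable a b
  rw [← intervalIntegral.integral_add_adjacent_intervals (hint (-π) (-g)) (hint (-g) π),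
      ← intervalIntegral.integral_add_adjacent_intervals (hint (-g) g) (hint g π)]
  have hI1 : ∫ ω in (-π)..(-g), E ω * Complex.exp (-Complex.I * k * ω)
      = (Complex.exp (-Complex.I * k * (-g : ℝ)) - Complex.exp (-Complex.I * k * (-π : ℝ)))
          / (-Complex.I * k) := by
    rw [← integral_exp_mul_complex hIk]
    apply intervalIntegral.integral_congr
    intro x hx
    rw [Set.uIcc_of_le (by linarith)] at hx
    have : g ≤ |x| := by
      rw [abs_of_nonpos (by nlinarith [hx.2])]
      linarith [hx.2]
    show E x * Complex.exp (-Complex.I * k * x) = Complex.exp (-Complex.I * k * x)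
    rw [hEone x this, one_mul]
  have hI3 : ∫ ω in g..π, E ω * Complex.exp (-Complex.I * k * ω)
      = (Complex.exp (-Complex.I * k * (π : ℝ)) - Complex.exp (-Complex.I * k * (g : ℝ)))
          / (-Complex.I * k) := by
    rw [← integral_exp_mul_complex hIk]
    apply intervalIntegral.integral_congr
    intro x hx
    rw [Set.uIcc_of_le (by linarith)] at hx
    have : g ≤ |x| := by
      rw [abs_of_nonneg (by linarith [hx.1])]
      exact hx.1
    show E x * Complex.exp (-Complex.I * k * x) = Complex.exp (-Complex.I * k * x)
    rw [hEone x this, one_mul]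
  have hI2 : ∫ ω in (-g)..g, E ω * Complex.exp (-Complex.I * k * ω)
      = (Complex.exp (Complex.I * ((t : ℂ) - (k : ℂ)) * (g : ℝ))
          - Complex.exp (Complex.I * ((t : ℂ) - (k : ℂ)) * (-g : ℝ)))
          / (Complex.I * ((t : ℂ) - (k : ℂ))) := by
    rw [← integral_exp_mul_complex htk]
    apply intervalIntegral.integral_congr
    intro x hx
    rw [Set.uIcc_of_le (by linarith)] at hx
    show E x * Complex.exp (-Complex.I * k * x) = Complex.exp (Complex.I * ((t:ℂ) - (k:ℂ)) * x)
    rw [hEexp x (abs_le.2 ⟨hx.1, hx.2⟩), ← Complex.exp_add]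
    congr 1
    push_cast
    ring
  rw [hI1, hI2, hI3]
  -- key exponential identities
  have e1 : Complex.exp (Complex.I * ((t : ℂ) - (k : ℂ)) * (g : ℝ))
      = Complex.exp (-(Complex.I * k * g)) := by
    have : Complex.I * ((t : ℂ) - (k : ℂ)) * (g : ℝ)
        = Complex.I * ((g : ℂ) * (t : ℂ)) + -(Complex.I * k * g) := by push_cast; ring
    rw [this, Complex.exp_add, hexpg, one_mul]
  have e2 : Complex.exp (Complex.I * ((t : ℂ) - (k : ℂ)) * ((-g : ℝ) : ℂ))
      = Complex.exp (Complex.I * k * g) := by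
    have : Complex.I * ((t : ℂ) - (k : ℂ)) * ((-g : ℝ) : ℂ)
        = -(Complex.I * ((g : ℂ) * (t : ℂ))) + Complex.I * k * g := by push_cast; ring
    rw [this, Complex.exp_add, Complex.exp_neg, hexpg, inv_one, one_mul]
  have e3 : Complex.exp (-Complex.I * (k : ℂ) * ((-π : ℝ) : ℂ))
      = Complex.exp (-Complex.I * (k : ℂ) * ((π : ℝ) : ℂ)) := by
    have : -Complex.I * (k : ℂ) * ((-π : ℝ) : ℂ)
        = -Complex.I * (k : ℂ) * ((π : ℝ) : ℂ) + (k : ℂ) * (2 * (π : ℂ) * Complex.I) := by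
      push_cast; ring
    rw [this, Complex.exp_add, Complex.exp_int_mul_two_pi_mul_I, mul_one]
  have e4 : Complex.exp (-Complex.I * (k : ℂ) * ((-g : ℝ) : ℂ))
      = Complex.exp (Complex.I * k * g) := by congr 1; push_cast; ring
  have e5 : Complex.exp (-Complex.I * (k : ℂ) * ((g : ℝ) : ℂ))
      = Complex.exp (-(Complex.I * k * g)) := by congr 1; push_cast; ring
  rw [e1, e2, e3, e4, e5]
  have hI := Complex.I_ne_zero
  have htk' : (t : ℂ) - (k : ℂ) ≠ 0 := sub_ne_zero.2 hkt
  field_simp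
  ring


theorem fourier_series_reproduces_exponential (Ω₁ : ℝ) (hΩ₁ : 0 < Ω₁) (hΩ₁π : Ω₁ < π)
    (t g : ℝ) (hg : Ω₁ ≤ g) (hgπ : g ≤ π)
    (hgt : Complex.exp (Complex.I * (g * t)) = 1)
    (E : ℝ → ℂ)
    (hE : ∀ ω : ℝ, E ω = if |ω| ≤ g then Complex.exp (Complex.I * ω * t) else 1)
    (a : ℤ → ℂ)
    (ha : ∀ k : ℤ, a k = (1 / (2 * (π : ℂ))) *
      ∫ ω in (-π)..π, E ω * Complex.exp (-Complex.I * k * ω)) :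
    ∀ ω : ℝ, |ω| ≤ Ω₁ →
      Summable (fun k : ℤ => ‖a k * Complex.exp (Complex.I * k * ω)‖) ∧
      ∑' k : ℤ, a k * Complex.exp (Complex.I * k * ω) = Complex.exp (Complex.I * ω * t) := by
  haveI : Fact (0 < 2 * π) := ⟨by positivity⟩
  have hg0 : 0 < g := lt_of_lt_of_le hΩ₁ hg
  have hEexp : ∀ ω : ℝ, |ω| ≤ g → E ω = Complex.exp (Complex.I * ω * t) := by
    intro ω h; rw [hE ω, if_pos h]
  have hexpneg : Complex.exp (-(Complex.I * ((g:ℂ) * (t:ℂ)))) = 1 := by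
    rw [Complex.exp_neg, hgt, inv_one]
  have hEone : ∀ ω : ℝ, g ≤ |ω| → E ω = 1 := by
    intro ω h
    rw [hE ω]
    split_ifs with h'
    · have habs : |ω| = g := le_antisymm h' h
      rcases (abs_eq hg0.le).1 habs with h1 | h1
      · rw [h1]; rw [show Complex.I * (g:ℂ) * (t:ℂ) = Complex.I * ((g:ℂ) * (t:ℂ)) by ring]
        exact hgt
      · rw [h1]; push_cast
        rw [show Complex.I * (-(g:ℂ)) * (t:ℂ) = -(Complex.I * ((g:ℂ) * (t:ℂ))) by ring]
        exact hexpneg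
    · rfl
  have hEcont : Continuous E := by
    have : E = fun ω : ℝ => if |ω| ≤ g then Complex.exp (Complex.I * ω * t) else 1 :=
      funext hE
    rw [this]
    apply Continuous.if_le
    · exact Complex.continuous_exp.comp (by continuity)
    · exact continuous_const
    · exact continuous_abs
    · exact continuous_const
    · intro x hx
      rcases (abs_eq hg0.le).1 hx with h1 | h1
      · rw [h1, show Complex.I * (g:ℂ) * (t:ℂ) = Complex.I * ((g:ℂ) * (t:ℂ)) by ring]
        exact hgt
      · rw [h1]; push_cast
        rw [show Complex.I * (-(g:ℂ)) * (t:ℂ) = -(Complex.I * ((g:ℂ) * (t:ℂ))) by ring]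
        exact hexpneg
  have hend : E (-π) = E (-π + 2 * π) := by
    rw [show -π + 2 * π = π by ring, hEone (-π) (by rw [abs_neg, abs_of_pos pi_pos]; exact hgπ),
      hEone π (by rw [abs_of_pos pi_pos]; exact hgπ)]
  set F : C(AddCircle (2 * π), ℂ) :=
    ⟨AddCircle.liftIco (2 * π) (-π) E, AddCircle.liftIco_continuous hend hEcont.continuousOn⟩
    with hF
  have hcoeff : ∀ k : ℤ, fourierCoeff (⇑F) k = a k := by
    intro k
    have : (⇑F) = AddCircle.liftIco (2 * π) (-π) E := rfl
    rw [this, fourierCoeff_liftIco_eq, fourierCoeffOn_eq_integral, ha]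
    rw [show -π + 2 * π = π by ring]
    rw [Complex.real_smul]
    have hπ : (π : ℂ) ≠ 0 := Complex.ofReal_ne_zero.2 pi_ne_zero
    congr 1
    · push_cast
      rw [show (π:ℂ) - -(π:ℂ) = 2 * π by ring]
    · apply intervalIntegral.integral_congr
      intro x hx
      show (fourier (-k)) (x : AddCircle (π - -π)) • E x = E x * Complex.exp (-Complex.I * k * x)
      rw [smul_eq_mul, fourier_coe_apply, mul_comm]
      congr 2
      push_cast
      field_simp
      ring
  -- norm facts
  have hnorm1 : ∀ r : ℝ, ‖Complex.exp ((r : ℂ) * Complex.I)‖ = 1 := by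
    intro r
    rw [Complex.norm_exp_ofReal_mul_I]
  have hπC : (π : ℂ) ≠ 0 := Complex.ofReal_ne_zero.2 pi_ne_zero
  -- bound on the coefficients
  have hbound : ∀ k : ℤ, 2 * |t| + 1 ≤ |(k : ℝ)| →
      ‖a k‖ ≤ (2 * |t| / π) * (1 / (k : ℝ) ^ 2) := by
    intro k hk
    have hk1 : (1 : ℝ) ≤ |(k : ℝ)| := by nlinarith [abs_nonneg t]
    have hk0 : (k : ℝ) ≠ 0 := by
      intro h; rw [h] at hk1; simp at hk1; linarith
    have hkZ : k ≠ 0 := by exact_mod_cast hk0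
    have hkC : (k : ℂ) ≠ 0 := Int.cast_ne_zero.mpr hkZ
    have htlt : |t| < |(k : ℝ)| := by nlinarith [abs_nonneg t]
    have htk_real : t ≠ (k : ℝ) := by
      intro h; rw [h] at htlt; exact absurd htlt (lt_irrefl _)
    have hktC : (t : ℂ) ≠ (k : ℂ) := by
      intro h; apply htk_real; exact_mod_cast h
    rw [ha k, integral_E t g hg0 hgπ E hEexp hEone hEcont hgt k hkC hktC]
    have hS : ‖Complex.exp (-(Complex.I * k * g)) - Complex.exp (Complex.I * k * g)‖ ≤ 2 := by
      refine le_trans (norm_sub_le _ _) ?_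
      rw [show -(Complex.I * (k : ℂ) * (g : ℂ)) = ((-((k : ℝ) * g) : ℝ) : ℂ) * Complex.I by
        push_cast; ring]
      rw [show Complex.I * (k : ℂ) * (g : ℂ) = (((k : ℝ) * g : ℝ) : ℂ) * Complex.I by
        push_cast; ring]
      rw [hnorm1, hnorm1]
      norm_num
    have hD : |(k : ℝ)| / 2 ≤ |t - (k : ℝ)| := by
      have h1 := abs_sub_abs_le_abs_sub ((k : ℝ)) t
      have h2 : |(k : ℝ) - t| = |t - (k : ℝ)| := abs_sub_comm _ _
      nlinarith
    have hDpos : 0 < |t - (k : ℝ)| := abs_pos.2 (sub_ne_zero.2 htk_real)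
    have habs_k_pos : (0 : ℝ) < |(k : ℝ)| := by linarith
    have e7 : ‖((π : ℝ) : ℂ)‖ = π := by
      rw [Complex.norm_real, Real.norm_eq_abs, abs_of_pos pi_pos]
    have e8 : ‖((t : ℝ) : ℂ)‖ = |t| := by rw [Complex.norm_real, Real.norm_eq_abs]
    have e9 : ‖((k : ℤ) : ℂ)‖ = |(k : ℝ)| := by
      rw [show ((k : ℤ) : ℂ) = (((k : ℝ) : ℝ) : ℂ) by push_cast; ring,
        Complex.norm_real, Real.norm_eq_abs]
    have e10 : ‖(t : ℂ) - (k : ℂ)‖ = |t - (k : ℝ)| := by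
      rw [show (t : ℂ) - (k : ℂ) = ((t - (k : ℝ) : ℝ) : ℂ) by push_cast; ring,
        Complex.norm_real, Real.norm_eq_abs]
    have heq : ‖(1 / (2 * (π : ℂ))) *
        ((Complex.exp (-(Complex.I * k * g)) - Complex.exp (Complex.I * k * g)) * (t : ℂ)
          / (Complex.I * (k : ℂ) * ((t : ℂ) - (k : ℂ))))‖
        = 1 / (2 * π) *
          (‖Complex.exp (-(Complex.I * k * g)) - Complex.exp (Complex.I * k * g)‖ * |t|
            / (|(k : ℝ)| * |t - (k : ℝ)|)) := by
      simp only [norm_mul, norm_div, norm_one, Complex.norm_I, one_mul, e7, e8, e9, e10]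
      norm_num
    rw [heq]
    have hksq : |(k : ℝ)| * (|(k : ℝ)| / 2) = (k : ℝ) ^ 2 / 2 := by
      rw [← sq_abs]; ring
    calc 1 / (2 * π) *
          (‖Complex.exp (-(Complex.I * k * g)) - Complex.exp (Complex.I * k * g)‖ * |t|
            / (|(k : ℝ)| * |t - (k : ℝ)|))
        ≤ 1 / (2 * π) * (2 * |t| / (|(k : ℝ)| * (|(k : ℝ)| / 2))) := by
          apply mul_le_mul_of_nonneg_left _ (by positivity)
          apply div_le_div₀ (by positivity)
            (mul_le_mul_of_nonneg_right hS (abs_nonneg t)) (by positivity)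
          exact mul_le_mul_of_nonneg_left hD (abs_nonneg _)
      _ = (2 * |t| / π) * (1 / (k : ℝ) ^ 2) := by
          rw [hksq]
          have hk2 : (k : ℝ) ^ 2 ≠ 0 := pow_ne_zero 2 hk0
          field_simp
  -- summability of the coefficients
  set N : ℕ := ⌈2 * |t| + 1⌉₊ with hNdef
  have hNk : ∀ k : ℤ, k ∉ Set.Icc (-(N : ℤ)) (N : ℤ) → 2 * |t| + 1 ≤ |(k : ℝ)| := by
    intro k hk
    simp only [Set.mem_Icc, not_and_or, not_le] at hk
    have h1 : (N : ℝ) ≤ |(k : ℝ)| := by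
      rcases hk with h | h
      · have h2 : (k : ℝ) < -(N : ℝ) := by exact_mod_cast h
        have h3 : (0:ℝ) ≤ (N:ℝ) := Nat.cast_nonneg N
        rw [abs_of_neg (by linarith)]
        linarith
      · have h2 : (N : ℝ) < (k : ℝ) := by exact_mod_cast h
        exact le_trans h2.le (le_abs_self _)
    exact le_trans (Nat.le_ceil _) h1
  have hsum_norm_a : Summable (fun k : ℤ => ‖a k‖) := by
    apply Summable.of_norm_bounded_eventually (g := fun k : ℤ => (2 * |t| / π) * (1 / (k : ℝ) ^ 2))
      ((Real.summable_one_div_int_pow.2 one_lt_two).mul_left _)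
    rw [Filter.eventually_cofinite]
    apply Set.Finite.subset (Set.finite_Icc (-(N : ℤ)) (N : ℤ))
    intro k hk
    by_contra hk'
    apply hk
    simp only [Set.mem_setOf_eq, norm_norm]
    exact hbound k (hNk k hk')
  have hsum_a : Summable a := by
    apply Summable.of_norm
    exact hsum_norm_a
  -- conclusion
  intro ω hω
  have hωa := abs_le.1 hω
  have hωIco : ω ∈ Set.Ico (-π) (-π + 2 * π) := by
    constructor
    · linarith [hωa.1]
    · have : -π + 2 * π = π := by ring
      rw [this]; linarith [hωa.2]
  have hFω : F (ω : AddCircle (2 * π)) = Complex.exp (Complex.I * ω * t) := by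
    show AddCircle.liftIco (2 * π) (-π) E ω = _
    rw [AddCircle.liftIco_coe_apply hωIco]
    exact hEexp ω (le_trans hω hg)
  have hsa : Summable (fourierCoeff (⇑F)) := by
    rw [show fourierCoeff (⇑F) = a from funext hcoeff]
    exact hsum_a
  have hs := has_pointwise_sum_fourier_series_of_summable hsa (ω : AddCircle (2 * π))
  have hfun : (fun i : ℤ => fourierCoeff (⇑F) i • fourier i ((ω : ℝ) : AddCircle (2 * π)))
      = fun k : ℤ => a k * Complex.exp (Complex.I * k * ω) := by
    funext k
    rw [hcoeff k, fourier_coe_apply, smul_eq_mul]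
    congr 1
    push_cast
    congr 1
    rw [div_eq_iff (show (2 : ℂ) * π ≠ 0 from mul_ne_zero two_ne_zero hπC)]
    ring
  rw [hfun, hFω] at hs
  constructor
  · refine hsum_norm_a.congr fun k => ?_
    rw [norm_mul,
      show Complex.I * (k : ℂ) * (ω : ℂ) = (((k : ℝ) * ω : ℝ) : ℂ) * Complex.I by
        push_cast; ring,
      hnorm1, mul_one]
  · exact hs.tsum_eq
end

section
/- Let x ∈ L²(ℝ) ∩ C(ℝ) be band-limited with Fourier transform supported in [−Ω, Ω] for some Ω ∈ (0, π), let N be a positive even integer with N > Ω/(π−Ω), let g be the 1-periodic extension of g(t) = πN/t from [N, N+1), and define a_m(t) = 1 − g(t)/π and a_k(t) = (t−m)sin(g(t)(k−m))/(π(k−m)(k−t)) for k ≠ m when t ∈ [N+m, N+m+1). Then for every t ∈ ℝ, x(t) = ∑_{k∈ℤ} a_k(t)·x(k), and the series converges absolutely. -/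
open Real MeasureTheory

noncomputable def samplingChi (g τ : ℝ) : ℝ → ℂ :=
  fun ω => if |ω| ≤ g then Complex.exp (Complex.I * ω * τ) else 1

lemma samplingChi_continuous {g τ : ℝ}
    (hE : Complex.exp (Complex.I * g * τ) = 1) :
    Continuous (samplingChi g τ) := by
  apply Continuous.if_le (by continuity) continuous_const continuous_abs continuous_const
  intro x hx
  have hg0 : 0 ≤ g := hx ▸ abs_nonneg x
  rcases (abs_eq hg0).mp hx with h | h
  · subst h; exact hE
  · subst h
    have : Complex.I * (-g : ℝ) * τ = -(Complex.I * g * τ) := by push_cast; ring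
    rw [this, Complex.exp_neg, hE, inv_one]

noncomputable def samplingCoeffs (g τ : ℝ) : ℤ → ℝ :=
  fun n => if n = 0 then 1 - g / π
    else τ * Real.sin (g * n) / (π * n * (n - τ))

lemma sampling_key_integral (g τ : ℝ) (hg0 : 0 < g) (hgπ : g < π) (hτ0 : 0 < τ)
    (hE : Complex.exp (Complex.I * g * τ) = 1)
    (hτZ : ∀ j : ℤ, τ ≠ j) (n : ℤ) :
    ∫ x in (-π : ℝ)..π, Complex.exp (-(Complex.I * n) * x) * samplingChi g τ x
      = 2 * (π : ℂ) * ((samplingCoeffs g τ n : ℝ) : ℂ) := by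
  have hπ := Real.pi_pos
  have hcont : Continuous fun x : ℝ => Complex.exp (-(Complex.I * n) * x) * samplingChi g τ x := by
    exact (Complex.continuous_exp.comp (by continuity)).mul (samplingChi_continuous hE)
  have hii : ∀ a b : ℝ, IntervalIntegrable
      (fun x : ℝ => Complex.exp (-(Complex.I * n) * x) * samplingChi g τ x) volume a b :=
    fun a b => hcont.intervalIntegrable a b
  rw [← intervalIntegral.integral_add_adjacent_intervals (b := -g) (hii _ _) (hii _ _),
      ← intervalIntegral.integral_add_adjacent_intervals (a := -g) (b := g) (hii _ _) (hii _ _)]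
  have hae : ∀ᵐ (x : ℝ), x ≠ -g := by
    rw [MeasureTheory.ae_iff]
    simpa using measure_singleton (α := ℝ) (-g)
  have h1 : (∫ x in (-π : ℝ)..(-g), Complex.exp (-(Complex.I * n) * x) * samplingChi g τ x)
      = ∫ x in (-π : ℝ)..(-g), Complex.exp (-(Complex.I * n) * x) := by
    apply intervalIntegral.integral_congr_ae
    filter_upwards [hae] with x hx hmem
    rw [Set.uIoc_of_le (by linarith : (-π : ℝ) ≤ -g)] at hmem
    have hxlt : x < -g := lt_of_le_of_ne hmem.2 hx
    have : ¬ |x| ≤ g := by rw [abs_le]; push_neg; intro h; linarith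
    simp [samplingChi, this]
  have h3 : (∫ x in (g : ℝ)..π, Complex.exp (-(Complex.I * n) * x) * samplingChi g τ x)
      = ∫ x in (g : ℝ)..π, Complex.exp (-(Complex.I * n) * x) := by
    apply intervalIntegral.integral_congr_ae
    filter_upwards with x hmem
    rw [Set.uIoc_of_le (by linarith : (g : ℝ) ≤ π)] at hmem
    have : ¬ |x| ≤ g := by rw [abs_le]; push_neg; intro h; linarith [hmem.1]
    simp [samplingChi, this]
  have h2 : (∫ x in (-g : ℝ)..g, Complex.exp (-(Complex.I * n) * x) * samplingChi g τ x)
      = ∫ x in (-g : ℝ)..g, Complex.exp ((Complex.I * ((τ : ℂ) - n)) * x) := by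
    apply intervalIntegral.integral_congr_ae
    filter_upwards with x hmem
    rw [Set.uIoc_of_le (by linarith : (-g : ℝ) ≤ g)] at hmem
    have : |x| ≤ g := abs_le.mpr ⟨le_of_lt hmem.1, hmem.2⟩
    simp only [samplingChi, if_pos this]
    rw [← Complex.exp_add]
    congr 1
    push_cast
    ring
  rw [h1, h2, h3]
  by_cases hn : n = 0
  · subst hn
    have hτc : ((τ : ℂ)) ≠ 0 := by exact_mod_cast hτ0.ne'
    have hc0 : Complex.I * ((τ : ℂ) - (0 : ℤ)) ≠ 0 := by
      simpa using mul_ne_zero Complex.I_ne_zero hτc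
    rw [integral_exp_mul_complex hc0]
    have e1 : Complex.exp (Complex.I * ((τ : ℂ) - ((0 : ℤ) : ℂ)) * ((g : ℝ) : ℂ)) = 1 := by
      rw [show Complex.I * ((τ : ℂ) - ((0 : ℤ) : ℂ)) * ((g : ℝ) : ℂ) = Complex.I * g * τ by
        push_cast; ring, hE]
    have e2 : Complex.exp (Complex.I * ((τ : ℂ) - ((0 : ℤ) : ℂ)) * ((-g : ℝ) : ℂ)) = 1 := by
      rw [show Complex.I * ((τ : ℂ) - ((0 : ℤ) : ℂ)) * ((-g : ℝ) : ℂ) = -(Complex.I * g * τ) by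
        push_cast; ring, Complex.exp_neg, hE, inv_one]
    rw [e1, e2]
    simp only [samplingCoeffs, if_pos rfl]
    norm_num
    have hπc : ((π : ℝ) : ℂ) ≠ 0 := by exact_mod_cast hπ.ne'
    field_simp
    ring
  · have hnc : ((n : ℤ) : ℂ) ≠ 0 := by exact_mod_cast hn
    have hIn : -(Complex.I * (n : ℂ)) ≠ 0 := by
      simpa using mul_ne_zero Complex.I_ne_zero hnc
    have hτn : ((τ : ℂ) - n) ≠ 0 := by
      rw [sub_ne_zero]
      exact_mod_cast hτZ n
    have hc0 : Complex.I * ((τ : ℂ) - n) ≠ 0 := mul_ne_zero Complex.I_ne_zero hτn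
    rw [integral_exp_mul_complex hIn, integral_exp_mul_complex hIn,
        integral_exp_mul_complex hc0]
    set u := Complex.exp (Complex.I * g * n) with hu
    set v := Complex.exp (-(Complex.I * g * n)) with hv
    have e1 : Complex.exp (-(Complex.I * n) * ((-g : ℝ) : ℂ)) = u := by
      rw [hu]; congr 1; push_cast; ring
    have e2 : Complex.exp (-(Complex.I * n) * ((g : ℝ) : ℂ)) = v := by
      rw [hv]; congr 1; push_cast; ring
    have e3 : Complex.exp (Complex.I * ((τ : ℂ) - n) * ((g : ℝ) : ℂ)) = v := by
      rw [show Complex.I * ((τ : ℂ) - n) * ((g : ℝ) : ℂ)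
          = Complex.I * g * τ + -(Complex.I * g * n) by push_cast; ring,
        Complex.exp_add, hE, one_mul, hv]
    have e4 : Complex.exp (Complex.I * ((τ : ℂ) - n) * ((-g : ℝ) : ℂ)) = u := by
      rw [show Complex.I * ((τ : ℂ) - n) * ((-g : ℝ) : ℂ)
          = -(Complex.I * g * τ) + Complex.I * g * n by push_cast; ring,
        Complex.exp_add, Complex.exp_neg, hE, inv_one, one_mul, hu]
    have e5 : Complex.exp (-(Complex.I * n) * ((-π : ℝ) : ℂ))
        = Complex.exp (-(Complex.I * n) * ((π : ℝ) : ℂ)) := by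
      rw [show -(Complex.I * (n : ℂ)) * ((-π : ℝ) : ℂ)
          = -(Complex.I * n) * ((π : ℝ) : ℂ) + n * (2 * π * Complex.I) by push_cast; ring,
        Complex.exp_add, Complex.exp_int_mul_two_pi_mul_I, mul_one]
    rw [e1, e2, e3, e4, e5]
    simp only [samplingCoeffs, if_neg hn]
    have hs : Complex.sin ((g : ℂ) * (n : ℂ)) = (v - u) * Complex.I / 2 := by
      rw [Complex.sin,
        show -((g : ℂ) * (n : ℂ)) * Complex.I = -(Complex.I * g * n) by ring,
        show ((g : ℂ) * (n : ℂ)) * Complex.I = Complex.I * g * n by ring, ← hu, ← hv]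
    push_cast
    rw [hs]
    have hπc : ((π : ℝ) : ℂ) ≠ 0 := by exact_mod_cast hπ.ne'
    have key : ∀ (A c : ℂ), c ≠ 0 → A / (Complex.I * c) = -(A * Complex.I) / c := by
      intro A c hc
      rw [div_eq_div_iff (mul_ne_zero Complex.I_ne_zero hc) hc]
      linear_combination A * c * Complex.I_mul_I
    rw [show -(Complex.I * (n : ℂ)) = Complex.I * (-(n : ℂ)) from by ring,
      key _ _ (neg_ne_zero.mpr hnc), key _ _ hτn, key _ _ (neg_ne_zero.mpr hnc)]
    field_simp
    have hnτ2 : ((n : ℂ) - (τ : ℂ)) ≠ 0 := fun h => hτn (by linear_combination -h)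
    have hX0 : (-((n : ℂ) * (π : ℂ) * (τ : ℂ) * 2) + (n : ℂ) ^ 2 * (π : ℂ) * 2) ≠ 0 := by
      have hfac : (-((n : ℂ) * (π : ℂ) * (τ : ℂ) * 2) + (n : ℂ) ^ 2 * (π : ℂ) * 2)
          = 2 * (π : ℂ) * (n : ℂ) * ((n : ℂ) - (τ : ℂ)) := by ring
      rw [hfac]
      exact mul_ne_zero (mul_ne_zero (mul_ne_zero two_ne_zero hπc) hnc) hnτ2
    rw [eq_div_iff hnτ2]
    ring

lemma samplingCoeff_eq (g τ : ℝ) (hg0 : 0 < g) (hgπ : g < π) (hτ0 : 0 < τ)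
    (hE : Complex.exp (Complex.I * g * τ) = 1)
    (hτZ : ∀ j : ℤ, τ ≠ j) (n : ℤ)
    (hab : (-π : ℝ) < -π + 2 * π) :
    fourierCoeffOn hab (samplingChi g τ) n = ((samplingCoeffs g τ n : ℝ) : ℂ) := by
  have hπ := Real.pi_pos
  rw [fourierCoeffOn_eq_integral]
  have hπc : ((π : ℝ) : ℂ) ≠ 0 := by exact_mod_cast hπ.ne'
  have hint : ∀ x : ℝ, (fourier (-n) (x : AddCircle (-π + 2 * π - -π))) • samplingChi g τ x
      = Complex.exp (-(Complex.I * n) * x) * samplingChi g τ x := by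
    intro x
    rw [smul_eq_mul, fourier_coe_apply]
    congr 1
    congr 1
    push_cast
    field_simp
    ring
  rw [intervalIntegral.integral_congr (fun x _ => hint x)]
  rw [show (-π + 2 * π : ℝ) = π by ring] at *
  rw [sampling_key_integral g τ hg0 hgπ hτ0 hE hτZ n]
  rw [show (π - -π : ℝ) = 2 * π by ring]
  rw [Complex.real_smul]
  push_cast
  field_simp

lemma samplingCoeffs_summable (g τ : ℝ) (hτ0 : 0 < τ) :
    Summable (fun n : ℤ => |samplingCoeffs g τ n|) := by
  have hπ := Real.pi_pos
  apply Summable.of_norm_bounded_eventually (g := fun n : ℤ => 2 * τ / π * (1 / (n : ℝ) ^ 2))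
    ((summable_one_div_int_pow.mpr one_lt_two).mul_left _)
  have hbound : ∀ n : ℤ, n ≠ 0 → |(n : ℝ)| / 2 ≤ |(n : ℝ) - τ| →
      ‖|samplingCoeffs g τ n|‖ ≤ 2 * τ / π * (1 / (n : ℝ) ^ 2) := by
    intro n hn0 hsep
    have hnR : ((n : ℝ)) ≠ 0 := Int.cast_ne_zero.mpr hn0
    have hnabs : 0 < |(n : ℝ)| := abs_pos.mpr hnR
    rw [Real.norm_eq_abs, abs_abs, samplingCoeffs, if_neg hn0]
    have habs : |τ * Real.sin (g * n) / (π * n * ((n : ℝ) - τ))|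
        = τ * |Real.sin (g * n)| / (π * |(n : ℝ)| * |(n : ℝ) - τ|) := by
      rw [abs_div, abs_mul, abs_mul, abs_mul, abs_of_pos hτ0, abs_of_pos Real.pi_pos]
    rw [habs]
    have hstep : τ * |Real.sin (g * n)| / (π * |(n : ℝ)| * |(n : ℝ) - τ|)
        ≤ τ * 1 / (π * |(n : ℝ)| * (|(n : ℝ)| / 2)) := by
      apply div_le_div₀ (by positivity)
        (mul_le_mul_of_nonneg_left (abs_sin_le_one _) hτ0.le) (by positivity)
        (mul_le_mul_of_nonneg_left hsep (by positivity))
    refine hstep.trans (le_of_eq ?_)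
    rw [show π * |(n : ℝ)| * (|(n : ℝ)| / 2) = π * (|(n : ℝ)| ^ 2) / 2 by ring, sq_abs]
    field_simp
  rw [Int.cofinite_eq, Filter.eventually_sup]
  constructor
  · filter_upwards [Filter.eventually_le_atBot (-1 : ℤ)] with n hn
    have hnR : (n : ℝ) ≤ -1 := by exact_mod_cast hn
    apply hbound n (by omega)
    have h1 : |(n : ℝ)| = -(n : ℝ) := abs_of_nonpos (by linarith)
    have h2 : |(n : ℝ) - τ| = τ - n := by rw [abs_of_nonpos (by linarith)]; ring
    rw [h1, h2]; linarith
  · filter_upwards [Filter.eventually_ge_atTop (max 1 ⌈2 * τ⌉)] with n hn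
    have h1 : (1 : ℤ) ≤ n := le_trans (le_max_left _ _) hn
    have h2 : (2 * τ : ℝ) ≤ n := by
      calc (2 * τ : ℝ) ≤ (⌈2 * τ⌉ : ℤ) := Int.le_ceil _
      _ ≤ n := by exact_mod_cast le_trans (le_max_right _ _) hn
    have hnR : (1 : ℝ) ≤ (n : ℝ) := by exact_mod_cast h1
    apply hbound n (by omega)
    have ha1 : |(n : ℝ)| = (n : ℝ) := abs_of_nonneg (by linarith)
    have ha2 : |(n : ℝ) - τ| = (n : ℝ) - τ := abs_of_nonneg (by linarith)
    rw [ha1, ha2]; linarith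

lemma samplingChi_hasSum (g τ : ℝ) (hg0 : 0 < g) (hgπ : g < π) (hτ0 : 0 < τ)
    (hE : Complex.exp (Complex.I * g * τ) = 1)
    (hτZ : ∀ j : ℤ, τ ≠ j) (ω : ℝ) (hω : |ω| ≤ g) (hωπ : |ω| < π) :
    HasSum (fun n : ℤ => ((samplingCoeffs g τ n : ℝ) : ℂ) * Complex.exp (Complex.I * n * ω))
      (Complex.exp (Complex.I * ω * τ)) := by
  have hπ := Real.pi_pos
  haveI : Fact (0 < 2 * π) := ⟨by linarith⟩
  have hend : samplingChi g τ (-π) = samplingChi g τ (-π + 2 * π) := by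
    have h1 : ¬ |(-π : ℝ)| ≤ g := by rw [abs_neg, abs_of_pos hπ]; linarith
    have h2 : ¬ |(-π + 2 * π : ℝ)| ≤ g := by
      rw [show (-π + 2 * π : ℝ) = π by ring, abs_of_pos hπ]; linarith
    unfold samplingChi
    rw [if_neg h1, if_neg h2]
  have hcont : Continuous (AddCircle.liftIco (2 * π) (-π) (samplingChi g τ)) :=
    AddCircle.liftIco_continuous hend (samplingChi_continuous hE).continuousOn
  set f : C(AddCircle (2 * π), ℂ) := ⟨AddCircle.liftIco (2 * π) (-π) (samplingChi g τ), hcont⟩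
    with hf
  have hcoeff : ∀ n : ℤ, fourierCoeff (⇑f) n
      = ((samplingCoeffs g τ n : ℝ) : ℂ) := by
    intro n
    have h := fourierCoeff_liftIco_eq (T := 2 * π) (a := -π) (samplingChi g τ) n
    calc fourierCoeff (⇑f) n
        = fourierCoeff (AddCircle.liftIco (2 * π) (-π) (samplingChi g τ)) n := rfl
      _ = _ := by rw [h]; exact samplingCoeff_eq g τ hg0 hgπ hτ0 hE hτZ n _
  have hsum : Summable (fun n : ℤ => fourierCoeff (⇑f) n) := by
    apply Summable.of_norm
    apply Summable.congr (samplingCoeffs_summable g τ hτ0)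
    intro n
    rw [hcoeff n, Complex.norm_real, Real.norm_eq_abs]
  have hps := has_pointwise_sum_fourier_series_of_summable hsum (ω : AddCircle (2 * π))
  have hfω : f (ω : AddCircle (2 * π)) = Complex.exp (Complex.I * ω * τ) := by
    have hmem : ω ∈ Set.Ico (-π) (-π + 2 * π) := by
      constructor
      · linarith [neg_abs_le ω]
      · have := le_abs_self ω; linarith
    have hlift : AddCircle.liftIco (2 * π) (-π) (samplingChi g τ) (ω : AddCircle (2 * π))
        = samplingChi g τ ω := AddCircle.liftIco_coe_apply hmem
    calc f (ω : AddCircle (2 * π)) = samplingChi g τ ω := hlift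
      _ = _ := by simp [samplingChi, hω]
  rw [hfω] at hps
  apply HasSum.congr_fun hps
  intro n
  rw [hcoeff n, smul_eq_mul]
  congr 1
  rw [fourier_coe_apply]
  congr 1
  have h2π : (((2 : ℝ) * π : ℝ) : ℂ) ≠ 0 := by
    exact_mod_cast (by linarith : (2 * π : ℝ) ≠ 0)
  rw [eq_div_iff h2π]
  push_cast
  ring
theorem modified_sampling_theorem_L2 (Ω : ℝ) (hΩ0 : 0 < Ω) (hΩπ : Ω < π)
    (N : ℤ) (hN : 0 < N) (hNe : Even N) (hNΩ : (N : ℝ) > Ω / (π - Ω))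
    (x : ℝ → ℂ) (hx : Continuous x) (hx2 : MemLp x 2 volume)
    (F : ℝ → ℂ) (hFi : Integrable F) (hF2 : MemLp F 2 volume)
    (hsupp : ∀ ω : ℝ, Ω < |ω| → F ω = 0)
    (hrep : ∀ t : ℝ, x t = (1 / (2 * (π : ℂ))) * ∫ ω : ℝ, Complex.exp (Complex.I * ω * t) * F ω)
    (m : ℝ → ℤ) (hm : ∀ t : ℝ, m t = ⌊t⌋ - N)
    (g : ℝ → ℝ) (hg : ∀ t : ℝ, g t = π * N / (t - m t))
    (a : ℤ → ℝ → ℝ)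
    (ha : ∀ (k : ℤ) (t : ℝ), a k t =
      if t = (k : ℝ) then 1
      else if k = m t then 1 - g t / π
      else (t - m t) * Real.sin (g t * ((k : ℝ) - m t)) /
        (π * ((k : ℝ) - m t) * ((k : ℝ) - t))) :
    ∀ t : ℝ, Summable (fun k : ℤ => ‖(a k t : ℂ) * x k‖) ∧
      HasSum (fun k : ℤ => (a k t : ℂ) * x k) (x t) := by
  intro t
  have hπ := Real.pi_pos
  have hNr : (0 : ℝ) < N := by exact_mod_cast hN
  by_cases hfrac : Int.fract t = 0
  · -- t is an integer
    have htint : ((⌊t⌋ : ℤ) : ℝ) = t := by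
      have := Int.self_sub_floor t
      rw [hfrac] at this
      linarith
    have htmN : t - (m t : ℝ) = N := by rw [hm t]; push_cast; linarith
    have hfun : ∀ k : ℤ, ((a k t : ℝ) : ℂ) * x k = if k = ⌊t⌋ then x t else 0 := by
      intro k
      by_cases hk : k = ⌊t⌋
      · subst hk
        rw [if_pos rfl, ha, if_pos htint.symm, htint]
        norm_num
      · have hne : t ≠ (k : ℝ) := by
          intro h
          exact hk (by exact_mod_cast (htint.trans h).symm)
        rw [if_neg hk, ha, if_neg hne]
        by_cases hkm : k = m t
        · rw [if_pos hkm, hg t, htmN]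
          have hd : π * (N : ℝ) / N / π = 1 := by field_simp
          rw [hd]
          norm_num
        · rw [if_neg hkm, hg t, htmN]
          have hdiv : π * (N : ℝ) / N = π := by field_simp
          rw [hdiv]
          have hsin : Real.sin (π * ((k : ℝ) - (m t : ℝ))) = 0 := by
            rw [show π * ((k : ℝ) - (m t : ℝ)) = ((k - m t : ℤ) : ℝ) * π by push_cast; ring]
            exact Real.sin_int_mul_pi _
          rw [hsin]
          norm_num
    constructor
    · apply Summable.congr (f := fun k : ℤ => if k = ⌊t⌋ then ‖x t‖ else 0)
      · exact (hasSum_ite_eq ⌊t⌋ ‖x t‖).summable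
      · intro k
        rw [hfun k, apply_ite norm, norm_zero]
    · have : (fun k : ℤ => ((a k t : ℝ) : ℂ) * x k) = fun k => if k = ⌊t⌋ then x t else 0 :=
        funext hfun
      rw [this]
      exact hasSum_ite_eq ⌊t⌋ (x t)
  · -- main case : t is not an integer
    set M : ℤ := ⌊t⌋ - N with hM
    have hmt : m t = M := by rw [hM]; exact hm t
    set τ : ℝ := t - (M : ℝ) with hτ
    have hτfract : τ = Int.fract t + N := by
      rw [hτ, hM, ← Int.self_sub_floor]
      push_cast
      ring
    have hfr0 : 0 < Int.fract t := lt_of_le_of_ne (Int.fract_nonneg t) (Ne.symm hfrac)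
    have hfr1 : Int.fract t < 1 := Int.fract_lt_one t
    have hτN : (N : ℝ) < τ := by rw [hτfract]; linarith
    have hτN1 : τ < N + 1 := by rw [hτfract]; linarith
    have hτ0 : 0 < τ := by linarith
    set G : ℝ := g t with hGset
    have hGdef : G = π * N / τ := by rw [hGset, hg t, hmt, ← hτ]
    have hG0 : 0 < G := by rw [hGdef]; positivity
    have hGπ : G < π := by
      rw [hGdef, div_lt_iff₀ hτ0]
      nlinarith
    have hGτ : G * τ = π * N := by rw [hGdef]; field_simp
    have hΩπΩ : Ω < (N : ℝ) * (π - Ω) := (div_lt_iff₀ (by linarith)).mp hNΩ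
    have hΩG : Ω < G := by
      rw [hGdef, lt_div_iff₀ hτ0]
      nlinarith
    have hE : Complex.exp (Complex.I * G * τ) = 1 := by
      obtain ⟨N2, hN2⟩ := hNe
      have harg : Complex.I * (G : ℂ) * (τ : ℂ) = (N2 : ℂ) * (2 * (π : ℂ) * Complex.I) := by
        rw [show Complex.I * (G : ℂ) * (τ : ℂ) = ((G * τ : ℝ) : ℂ) * Complex.I by
          push_cast; ring, hGτ]
        push_cast [hN2]
        ring
      rw [harg]
      exact Complex.exp_int_mul_two_pi_mul_I N2
    have hτZ : ∀ j : ℤ, τ ≠ j := by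
      intro j h
      have h1 : Int.fract t = (j : ℝ) - N := by rw [hτfract] at h; linarith
      have h2 : (0 : ℝ) < ((j - N : ℤ) : ℝ) := by push_cast; linarith
      have h3 : ((j - N : ℤ) : ℝ) < 1 := by push_cast; linarith
      have h2' : (0 : ℤ) < j - N := by exact_mod_cast h2
      have h3' : (j - N : ℤ) < 1 := by exact_mod_cast h3
      omega
    have hac : ∀ k : ℤ, a k t = samplingCoeffs G τ (k - M) := by
      intro k
      have htk : t ≠ (k : ℝ) := by
        intro h
        exact hτZ (k - M) (by rw [hτ, h]; push_cast; ring)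
      rw [ha, if_neg htk, hmt, ← hGset]
      by_cases hkM : k = M
      · rw [if_pos hkM, samplingCoeffs, if_pos (by omega : k - M = 0)]
      · rw [if_neg hkM, samplingCoeffs, if_neg (by omega : ¬ k - M = 0)]
        have hc1 : ((k - M : ℤ) : ℝ) = (k : ℝ) - M := by push_cast; ring
        rw [hc1, ← hτ]
        have hc2 : (k : ℝ) - (M : ℝ) - τ = (k : ℝ) - t := by rw [hτ]; ring
        rw [hc2]
    -- boundedness of samples
    have hexp1 : ∀ (ω s : ℝ), ‖Complex.exp (Complex.I * ω * s)‖ = 1 := by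
      intro ω s
      rw [show Complex.I * (ω : ℂ) * (s : ℂ) = ((ω * s : ℝ) : ℂ) * Complex.I by push_cast; ring]
      exact Complex.norm_exp_ofReal_mul_I _
    set C : ℝ := 1 / (2 * π) * ∫ ω : ℝ, ‖F ω‖ with hC
    have hxb : ∀ s : ℝ, ‖x s‖ ≤ C := by
      intro s
      rw [hrep s, norm_mul]
      have h1 : ‖(1 / (2 * (π : ℂ)))‖ = 1 / (2 * π) := by
        rw [show (1 / (2 * (π : ℂ))) = ((1 / (2 * π) : ℝ) : ℂ) by push_cast; ring,
          Complex.norm_real, Real.norm_of_nonneg (by positivity)]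
      rw [h1, hC]
      apply mul_le_mul_of_nonneg_left _ (by positivity)
      calc ‖∫ ω : ℝ, Complex.exp (Complex.I * ω * s) * F ω‖
          ≤ ∫ ω : ℝ, ‖Complex.exp (Complex.I * ω * s) * F ω‖ :=
            norm_integral_le_integral_norm _
        _ = ∫ ω : ℝ, ‖F ω‖ := by
            apply integral_congr_ae (Filter.Eventually.of_forall fun ω => ?_)
            rw [norm_mul, hexp1, one_mul]
    have hsumc : Summable (fun k : ℤ => |samplingCoeffs G τ (k - M)|) :=
      ((Equiv.subRight M).summable_iff (f := fun n : ℤ => |samplingCoeffs G τ n|)).mpr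
        (samplingCoeffs_summable G τ hτ0)
    have hCnn : 0 ≤ C := by rw [hC]; positivity
    have hSummable : Summable (fun k : ℤ => ‖((a k t : ℝ) : ℂ) * x k‖) := by
      apply Summable.of_nonneg_of_le (fun k => norm_nonneg _) _ (hsumc.mul_right C)
      intro k
      rw [norm_mul, hac k, Complex.norm_real, Real.norm_eq_abs]
      exact mul_le_mul_of_nonneg_left (hxb _) (abs_nonneg _)
    refine ⟨hSummable, ?_⟩
    -- the series
    set Fn : ℤ → ℝ → ℂ := fun n ω =>
      ((samplingCoeffs G τ n : ℝ) : ℂ) *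
        Complex.exp (Complex.I * ω * (((M + n : ℤ) : ℝ) : ℂ)) * F ω with hFn
    have hpt : ∀ ω : ℝ,
        HasSum (fun n : ℤ => Fn n ω) (Complex.exp (Complex.I * ω * t) * F ω) := by
      intro ω
      by_cases hωΩ : |ω| ≤ Ω
      · have h1 := samplingChi_hasSum G τ hG0 hGπ hτ0 hE hτZ ω
          (le_of_lt (lt_of_le_of_lt hωΩ hΩG)) (lt_of_le_of_lt hωΩ hΩπ)
        have h2 := h1.mul_right (Complex.exp (Complex.I * ω * (M : ℝ)) * F ω)
        have hfeq : (fun n : ℤ => Fn n ω) = fun n : ℤ =>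
            ((samplingCoeffs G τ n : ℝ) : ℂ) * Complex.exp (Complex.I * n * ω) *
              (Complex.exp (Complex.I * ω * (M : ℝ)) * F ω) := by
          funext n
          rw [hFn]
          simp only
          have hee : Complex.exp (Complex.I * ω * (((M + n : ℤ) : ℝ) : ℂ))
              = Complex.exp (Complex.I * n * ω) * Complex.exp (Complex.I * ω * ((M : ℝ) : ℂ)) := by
            rw [← Complex.exp_add]
            congr 1
            push_cast
            ring
          rw [hee]
          ring
        have hval : Complex.exp (Complex.I * ω * t) * F ω
            = Complex.exp (Complex.I * ω * τ) *
              (Complex.exp (Complex.I * ω * ((M : ℝ) : ℂ)) * F ω) := by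
          have hee : Complex.exp (Complex.I * ω * (t : ℂ))
              = Complex.exp (Complex.I * ω * ((τ : ℝ) : ℂ)) *
                Complex.exp (Complex.I * ω * ((M : ℝ) : ℂ)) := by
            rw [← Complex.exp_add]
            congr 1
            rw [hτ]
            push_cast
            ring
          rw [hee]
          ring
        rw [hfeq, hval]
        exact h2
      · have hF0 : F ω = 0 := hsupp ω (not_le.mp hωΩ)
        have : (fun n : ℤ => Fn n ω) = fun _ => (0 : ℂ) := by
          funext n; rw [hFn]; simp [hF0]
        rw [this, hF0, mul_zero]
        exact hasSum_zero
    have hInt : ∀ n : ℤ, Integrable (fun ω => Fn n ω) volume := by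
      intro n
      have hfneq : (fun ω => Fn n ω) = fun ω : ℝ =>
          (((samplingCoeffs G τ n : ℝ) : ℂ) *
            Complex.exp (Complex.I * ω * (((M + n : ℤ) : ℝ) : ℂ))) * F ω := rfl
      rw [hfneq]
      refine Integrable.bdd_mul (c := |samplingCoeffs G τ n|) hFi ?_ (Filter.Eventually.of_forall fun ω => ?_)
      · exact (continuous_const.mul (Complex.continuous_exp.comp
          ((continuous_const.mul Complex.continuous_ofReal).mul
            continuous_const))).aestronglyMeasurable
      · rw [norm_mul, Complex.norm_real, Real.norm_eq_abs, hexp1, mul_one]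
    have hnormint : ∀ n : ℤ, (∫ ω : ℝ, ‖Fn n ω‖)
        = |samplingCoeffs G τ n| * ∫ ω : ℝ, ‖F ω‖ := by
      intro n
      rw [← integral_const_mul]
      apply integral_congr_ae (Filter.Eventually.of_forall fun ω => ?_)
      rw [hFn]
      simp only
      rw [norm_mul, norm_mul, Complex.norm_real, Real.norm_eq_abs, hexp1, mul_one]
    have hsumint : Summable (fun n : ℤ => ∫ ω : ℝ, ‖Fn n ω‖) := by
      apply Summable.congr ((samplingCoeffs_summable G τ hτ0).mul_right (∫ ω : ℝ, ‖F ω‖))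
      intro n
      rw [hnormint]
    have hmain := MeasureTheory.hasSum_integral_of_summable_integral_norm hInt hsumint
    have htsumeq : (∫ ω : ℝ, ∑' n : ℤ, Fn n ω)
        = ∫ ω : ℝ, Complex.exp (Complex.I * ω * t) * F ω :=
      integral_congr_ae (Filter.Eventually.of_forall fun ω => (hpt ω).tsum_eq)
    rw [htsumeq] at hmain
    have hmain2 := hmain.mul_left (1 / (2 * (π : ℂ)))
    rw [← hrep t] at hmain2
    have hterm : ∀ n : ℤ, (1 / (2 * (π : ℂ))) * ∫ ω : ℝ, Fn n ω
        = ((samplingCoeffs G τ n : ℝ) : ℂ) * x (((M + n : ℤ) : ℝ)) := by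
      intro n
      rw [hrep (((M + n : ℤ) : ℝ))]
      have : (fun ω : ℝ => Fn n ω) = fun ω : ℝ =>
          ((samplingCoeffs G τ n : ℝ) : ℂ) *
            (Complex.exp (Complex.I * ω * (((M + n : ℤ) : ℝ) : ℂ)) * F ω) := by
        funext ω; rw [hFn]; ring
      rw [this, integral_const_mul]
      ring
    have hfe : (fun n : ℤ => (1 / (2 * (π : ℂ))) * ∫ ω : ℝ, Fn n ω)
        = fun n : ℤ => ((samplingCoeffs G τ n : ℝ) : ℂ) * x (((M + n : ℤ) : ℝ)) :=
      funext hterm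
    rw [hfe] at hmain2
    have hfinal := ((Equiv.subRight M).hasSum_iff
      (f := fun n : ℤ => ((samplingCoeffs G τ n : ℝ) : ℂ) * x (((M + n : ℤ) : ℝ)))
      (a := x t)).mpr hmain2
    have hgoal : (fun k : ℤ => ((a k t : ℝ) : ℂ) * x k)
        = (fun n : ℤ => ((samplingCoeffs G τ n : ℝ) : ℂ) * x (((M + n : ℤ) : ℝ)))
          ∘ ⇑(Equiv.subRight M) := by
      funext k
      simp only [Function.comp_apply, Equiv.subRight_apply]
      rw [hac k, show M + (k - M) = k from by omega]
    rw [hgoal]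
    exact hfinal
end

section
/- Let Ω ∈ (0, π) and x(t) = e^{iλt} for some λ ∈ [−Ω, Ω]. With N a positive even integer satisfying N > Ω/(π−Ω), g the 1-periodic extension of πN/t from [N, N+1), and coefficients a_k(t) as in the modified interpolation formula (a_m(t) = 1 − g(t)/π; a_k(t) = (t−m)sin(g(t)(k−m))/(π(k−m)(k−t)) for k ≠ m, t ∈ [N+m, N+m+1)), we have e^{iλt} = ∑_{k∈ℤ} a_k(t)·e^{iλk} for every t ∈ ℝ, with absolute convergence. -/
open Real

lemma msE_exp (N r : ℤ) (hr : N = r + r) (x : ℝ) (hx : x = π * N ∨ x = -(π * N)) :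
    Complex.exp (Complex.I * x) = 1 := by
  rcases hx with h | h
  · rw [h, show Complex.I * ((π * N : ℝ) : ℂ) = (r : ℂ) * (2 * (π : ℂ) * Complex.I) by
      push_cast [hr]; ring]
    exact Complex.exp_int_mul_two_pi_mul_I r
  · rw [h, show Complex.I * ((-(π * N) : ℝ) : ℂ) = ((-r : ℤ) : ℂ) * (2 * (π : ℂ) * Complex.I) by
      push_cast [hr]; ring]
    exact Complex.exp_int_mul_two_pi_mul_I (-r)

lemma msE_sin (N r : ℤ) (hr : N = r + r) (x : ℝ) : Real.sin (π * N + x) = Real.sin x := by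
  rw [show π * N + x = x + r * (2 * π) by push_cast [hr]; ring, Real.sin_add_int_mul_two_pi]

lemma msE_two_sin (w : ℝ) :
    Complex.exp (Complex.I * w) - Complex.exp (-(Complex.I * w)) =
      2 * Complex.I * Real.sin w := by
  rw [show Complex.I * (w : ℂ) = (w : ℂ) * Complex.I from mul_comm _ _,
    show -((w : ℂ) * Complex.I) = ((-w : ℝ) : ℂ) * Complex.I by push_cast; ring,
    Complex.exp_mul_I, Complex.exp_mul_I]
  push_cast
  rw [Complex.cos_neg, Complex.sin_neg, ← Complex.ofReal_sin]
  ring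

lemma msE_norm1 (lam : ℝ) (k : ℤ) : ‖Complex.exp (Complex.I * lam * k)‖ = 1 := by
  rw [show Complex.I * (lam : ℂ) * (k : ℂ) = ((lam * k : ℝ) : ℂ) * Complex.I by push_cast; ring,
    Complex.norm_exp_ofReal_mul_I]

set_option maxHeartbeats 1000000 in
lemma msE_hard (N : ℤ) (hN : 0 < N) (hNe : Even N)
    (t s G lam : ℝ) (M : ℤ)
    (hs : s = t - M) (hsN : (N : ℝ) < s) (hsN1 : s < (N : ℝ) + 1)
    (hGdef : G = π * N / s)
    (hlamG : |lam| < G) (hlamπ : |lam| < π)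
    (htk : ∀ k : ℤ, t ≠ (k : ℝ))
    (A : ℤ → ℝ)
    (hA : ∀ k : ℤ, A k = if k = M then 1 - G / π
      else (t - M) * Real.sin (G * ((k : ℝ) - M)) / (π * ((k : ℝ) - M) * ((k : ℝ) - t))) :
    Summable (fun k : ℤ => ‖(A k : ℂ) * Complex.exp (Complex.I * lam * k)‖) ∧
    HasSum (fun k : ℤ => (A k : ℂ) * Complex.exp (Complex.I * lam * k))
      (Complex.exp (Complex.I * lam * t)) := by
  obtain ⟨r, hr⟩ := hNe
  have hπ : (0 : ℝ) < π := Real.pi_pos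
  have hs0 : 0 < s := lt_trans (by exact_mod_cast hN) hsN
  have hG0 : 0 < G := by rw [hGdef]; positivity
  have hGπ : G < π := by
    rw [hGdef, div_lt_iff₀ hs0]
    nlinarith
  have hGs : G * s = π * N := by rw [hGdef]; field_simp
  -- summability of |A|
  have hSum : Summable fun k : ℤ => |A k| := by
    have h0 : Summable (fun j : ℤ => 1 / (j : ℝ) ^ 2) :=
      Real.summable_one_div_int_pow.mpr one_lt_two
    have h1 : Summable (fun n : ℤ => 1 / (((n - M : ℤ) : ℝ)) ^ 2) :=
      h0.comp_injective (fun a b hab => by simpa using hab : Function.Injective fun n : ℤ => n - M)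
    have hg : Summable (fun n : ℤ => s / (π * ((n : ℝ) - M) ^ 2 / 2)) := by
      refine (h1.mul_left (2 * s / π)).congr fun n => ?_
      rw [show ((n - M : ℤ) : ℝ) = (n : ℝ) - M by push_cast; ring]
      rcases eq_or_ne ((n : ℝ) - M) 0 with h | h
      · rw [h]; norm_num
      · field_simp
    refine Summable.of_norm_bounded_eventually hg ?_
    rw [Filter.eventually_cofinite]
    refine Set.Finite.subset (Set.finite_Icc (M - 2 * (N + 1)) (M + 2 * (N + 1))) ?_
    intro n hn
    simp only [Set.mem_setOf_eq] at hn
    by_contra hmem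
    refine hn ?_
    have hfar : 2 * ((N : ℝ) + 1) ≤ |(n : ℝ) - M| := by
      simp only [Set.mem_Icc, not_and_or, not_le] at hmem
      rcases hmem with h | h
      · have hc : (n : ℝ) ≤ (M : ℝ) - 2 * ((N : ℝ) + 1) - 1 := by exact_mod_cast
          (by omega : n ≤ M - 2 * (N + 1) - 1)
        rw [abs_sub_comm, abs_of_nonneg (by linarith)]
        linarith
      · have hc : (M : ℝ) + 2 * ((N : ℝ) + 1) + 1 ≤ (n : ℝ) := by exact_mod_cast
          (by omega : M + 2 * (N + 1) + 1 ≤ n)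
        rw [abs_of_nonneg (by linarith)]
        linarith
    have hN' : (0 : ℝ) < N := by exact_mod_cast hN
    have hnM : n ≠ M := by
      intro h; subst h
      rw [sub_self, abs_zero] at hfar
      linarith
    have hnM' : ((n : ℝ) - M) ≠ 0 := by
      have : (n : ℝ) ≠ (M : ℝ) := by exact_mod_cast hnM
      exact sub_ne_zero.mpr this
    have habs0 : 0 < |(n : ℝ) - M| := abs_pos.mpr hnM'
    have hsq : 0 < ((n : ℝ) - M) ^ 2 := by nlinarith [sq_abs ((n : ℝ) - M)]
    have hts : |t - (M : ℝ)| = s := by rw [← hs, abs_of_pos hs0]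
    have habs1 : |(n : ℝ) - M| / 2 ≤ |(n : ℝ) - t| := by
      have h2 : |(n : ℝ) - M| - |t - (M : ℝ)| ≤ |(n : ℝ) - t| := by
        have := abs_sub_abs_le_abs_sub ((n : ℝ) - M) (t - (M : ℝ))
        rw [show (n : ℝ) - M - (t - (M : ℝ)) = (n : ℝ) - t by ring] at this
        linarith
      rw [hts] at h2
      linarith
    have hAn : A n = (t - M) * Real.sin (G * ((n : ℝ) - M)) /
        (π * ((n : ℝ) - M) * ((n : ℝ) - t)) := by rw [hA n, if_neg hnM]
    rw [Real.norm_eq_abs, abs_abs, hAn, abs_div]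
    have hnum : |(t - (M : ℝ)) * Real.sin (G * ((n : ℝ) - M))| ≤ s := by
      rw [abs_mul, hts]
      have := abs_le.mpr ⟨Real.neg_one_le_sin (G * ((n : ℝ) - M)),
        Real.sin_le_one (G * ((n : ℝ) - M))⟩
      nlinarith
    have hden : π * ((n : ℝ) - M) ^ 2 / 2 ≤ |π * ((n : ℝ) - M) * ((n : ℝ) - t)| := by
      rw [abs_mul, abs_mul, abs_of_pos hπ]
      have h3 : |(n : ℝ) - M| * |(n : ℝ) - M| = ((n : ℝ) - M) ^ 2 := by
        rw [← sq_abs]; ring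
      nlinarith [mul_le_mul_of_nonneg_left habs1
        (by positivity : (0:ℝ) ≤ π * |(n:ℝ) - M|)]
    exact div_le_div₀ hs0.le hnum (by positivity) hden
  -- the function E and its Fourier coefficients
  set E : ℝ → ℂ := fun x => if |x| ≤ G then Complex.exp (Complex.I * x * t)
    else Complex.exp (Complex.I * x * M) with hE
  have hbd : ∀ x : ℝ, |x| = G → Complex.exp (Complex.I * x * t) = Complex.exp (Complex.I * x * M) := by
    intro x hx
    have : Complex.exp (Complex.I * x * t) =
        Complex.exp (Complex.I * x * M) * Complex.exp (Complex.I * (x * s : ℝ)) := by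
      rw [← Complex.exp_add]; congr 1; push_cast [hs]; ring
    rw [this, msE_exp N r hr (x * s) ?_, mul_one]
    rcases abs_eq hG0.le |>.mp hx with h | h
    · left; rw [h, hGs]
    · right; rw [h]; rw [← hGs]; ring
  have hEcont : Continuous E := by
    rw [hE]
    apply Continuous.if_le
    · exact Complex.continuous_exp.comp
        ((continuous_const.mul Complex.continuous_ofReal).mul continuous_const)
    · exact Complex.continuous_exp.comp
        ((continuous_const.mul Complex.continuous_ofReal).mul continuous_const)
    · exact continuous_abs
    · exact continuous_const
    · exact hbd
  haveI : Fact (0 < 2 * π) := ⟨by positivity⟩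
  have hEend : E (-π) = E (-π + 2 * π) := by
    have h1 : ¬(|(-π : ℝ)| ≤ G) := by rw [abs_neg, abs_of_pos hπ]; linarith
    have h2 : ¬(|(-π + 2 * π : ℝ)| ≤ G) := by
      rw [show (-π + 2 * π : ℝ) = π by ring, abs_of_pos hπ]; linarith
    rw [hE]; simp only [h1, h2, if_false]
    rw [Complex.exp_eq_exp_iff_exists_int]
    exact ⟨-M, by push_cast; ring⟩
  have hF : Continuous (AddCircle.liftIco (2 * π) (-π) E) :=
    AddCircle.liftIco_continuous hEend hEcont.continuousOn
  set F : C(AddCircle (2 * π), ℂ) := ⟨AddCircle.liftIco (2 * π) (-π) E, hF⟩ with hFdef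
  have hFc : ∀ n : ℤ, fourierCoeff (F : AddCircle (2 * π) → ℂ) n = (A n : ℂ) := by
    intro n
    have hintg : ∀ (c : ℂ) (u v : ℝ),
        IntervalIntegrable (fun x : ℝ => Complex.exp (c * x) * E x) MeasureTheory.volume u v := by
      intro c u v
      exact ((Complex.continuous_exp.comp (continuous_const.mul Complex.continuous_ofReal)).mul
        hEcont).intervalIntegrable u v
    set cn : ℂ := -(Complex.I * n) with hcn
    have key : (∫ x in (-π : ℝ)..π, Complex.exp (cn * x) * E x) = 2 * π * (A n : ℂ) := by
      have hsplit2 := intervalIntegral.integral_add_adjacent_intervals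
        (hintg cn (-G) G) (hintg cn G π)
      have hsplit := intervalIntegral.integral_add_adjacent_intervals
        (hintg cn (-π) (-G)) (hintg cn (-G) π)
      rw [← hsplit, ← hsplit2]
      set d : ℂ := (M : ℂ) - n with hd'
      set c1 : ℂ := Complex.I * d with hc1'
      set c2 : ℂ := Complex.I * ((t : ℂ) - n) with hc2'
      have hI1 : (∫ x in (-π : ℝ)..(-G), Complex.exp (cn * x) * E x)
          = ∫ x in (-π : ℝ)..(-G), Complex.exp (c1 * x) := by
        refine intervalIntegral.integral_congr fun x hx => ?_
        rw [Set.uIcc_of_le (by linarith : (-π : ℝ) ≤ -G)] at hx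
        obtain ⟨hx1, hx2⟩ := hx
        show Complex.exp (cn * x) * E x = _
        rw [hE]; dsimp only
        by_cases hxG : |x| ≤ G
        · have hxeq : x = -G := le_antisymm hx2 (abs_le.mp hxG).1
          rw [if_pos hxG, hbd x (by rw [hxeq, abs_neg, abs_of_pos hG0])]
          rw [← Complex.exp_add]; congr 1; rw [hcn, hc1', hd']; push_cast; ring
        · rw [if_neg hxG, ← Complex.exp_add]; congr 1; rw [hcn, hc1', hd']; push_cast; ring
      have hI3 : (∫ x in (G : ℝ)..π, Complex.exp (cn * x) * E x)
          = ∫ x in (G : ℝ)..π, Complex.exp (c1 * x) := by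
        refine intervalIntegral.integral_congr fun x hx => ?_
        rw [Set.uIcc_of_le (by linarith : (G : ℝ) ≤ π)] at hx
        obtain ⟨hx1, hx2⟩ := hx
        show Complex.exp (cn * x) * E x = _
        rw [hE]; dsimp only
        by_cases hxG : |x| ≤ G
        · have hxeq : x = G := le_antisymm (abs_le.mp hxG).2 hx1
          rw [if_pos hxG, hbd x (by rw [hxeq, abs_of_pos hG0])]
          rw [← Complex.exp_add]; congr 1; rw [hcn, hc1', hd']; push_cast; ring
        · rw [if_neg hxG, ← Complex.exp_add]; congr 1; rw [hcn, hc1', hd']; push_cast; ring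
      have hI2 : (∫ x in (-G : ℝ)..G, Complex.exp (cn * x) * E x)
          = ∫ x in (-G : ℝ)..G, Complex.exp (c2 * x) := by
        refine intervalIntegral.integral_congr fun x hx => ?_
        rw [Set.uIcc_of_le (by linarith : (-G : ℝ) ≤ G)] at hx
        show Complex.exp (cn * x) * E x = _
        rw [hE]; dsimp only
        rw [if_pos (abs_le.mpr ⟨hx.1, hx.2⟩), ← Complex.exp_add]
        congr 1; rw [hcn, hc2']; push_cast; ring
      rw [hI1, hI2, hI3]
      have htn : ((t : ℂ) - n) ≠ 0 := by
        rw [show ((t : ℂ) - n) = (((t - n : ℝ)) : ℂ) by push_cast; ring]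
        exact Complex.ofReal_ne_zero.mpr (sub_ne_zero.mpr (htk n))
      have hc2z : c2 ≠ 0 := mul_ne_zero Complex.I_ne_zero htn
      by_cases hnM : n = M
      · subst hnM
        have hc1z : c1 = 0 := by rw [hc1', hd', sub_self, mul_zero]
        simp only [hc1z, zero_mul, Complex.exp_zero]
        rw [intervalIntegral.integral_const, intervalIntegral.integral_const,
          integral_exp_mul_complex hc2z]
        have he1 : Complex.exp (c2 * ((G : ℝ) : ℂ)) = 1 := by
          rw [hc2', show Complex.I * ((t : ℂ) - n) * ((G : ℝ) : ℂ)
            = Complex.I * (((t - n) * G : ℝ) : ℂ) by push_cast; ring]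
          exact msE_exp N r hr _ (Or.inl (by rw [← hs, ← hGs]; ring))
        have he2 : Complex.exp (c2 * ((-G : ℝ) : ℂ)) = 1 := by
          rw [hc2', show Complex.I * ((t : ℂ) - n) * ((-G : ℝ) : ℂ)
            = Complex.I * (((t - n) * -G : ℝ) : ℂ) by push_cast; ring]
          exact msE_exp N r hr _ (Or.inr (by rw [← hs, ← hGs]; ring))
        rw [he1, he2, hA n, if_pos rfl]
        rw [Complex.real_smul, Complex.real_smul]
        have hπC : (π : ℂ) ≠ 0 := Complex.ofReal_ne_zero.mpr Real.pi_ne_zero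
        push_cast
        field_simp
        ring
      · have hdz : d ≠ 0 := by
          rw [hd']
          intro hcon
          exact hnM (by exact_mod_cast (sub_eq_zero.mp hcon).symm)
        have hc1z : c1 ≠ 0 := mul_ne_zero Complex.I_ne_zero hdz
        rw [integral_exp_mul_complex hc1z, integral_exp_mul_complex hc2z,
          integral_exp_mul_complex hc1z]
        set w1 : ℝ := ((M : ℝ) - n) * π with hw1
        set w2 : ℝ := G * ((M : ℝ) - n) with hw2
        have e1 : c1 * ((π : ℝ) : ℂ) = Complex.I * (w1 : ℂ) := by
          rw [hc1', hd', hw1]; push_cast; ring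
        have e2 : c1 * ((-π : ℝ) : ℂ) = -(Complex.I * (w1 : ℂ)) := by
          rw [hc1', hd', hw1]; push_cast; ring
        have e3 : c1 * ((G : ℝ) : ℂ) = Complex.I * (w2 : ℂ) := by
          rw [hc1', hd', hw2]; push_cast; ring
        have e4 : c1 * ((-G : ℝ) : ℂ) = -(Complex.I * (w2 : ℂ)) := by
          rw [hc1', hd', hw2]; push_cast; ring
        have e5 : c2 * ((G : ℝ) : ℂ) = Complex.I * ((G * (t - n) : ℝ) : ℂ) := by
          rw [hc2']; push_cast; ring
        have e6 : c2 * ((-G : ℝ) : ℂ) = -(Complex.I * ((G * (t - n) : ℝ) : ℂ)) := by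
          rw [hc2']; push_cast; ring
        rw [e1, e2, e3, e4, e5, e6]
        have s1 : Real.sin w1 = 0 := by
          rw [hw1, show ((M : ℝ) - n) = ((M - n : ℤ) : ℝ) by push_cast; ring]
          exact Real.sin_int_mul_pi _
        have s3 : Real.sin (G * (t - n)) = Real.sin w2 := by
          rw [show G * (t - n) = π * N + w2 by rw [hw2, ← hGs, hs]; ring]
          exact msE_sin N r hr w2
        have T1 := msE_two_sin w1
        rw [s1] at T1
        push_cast at T1
        rw [mul_zero] at T1
        have T2 := msE_two_sin w2
        have T3 := msE_two_sin (G * (t - n))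
        rw [s3] at T3
        rw [show ∀ p q r : ℂ, p + (q + r) = p + r + q from fun p q r => by ring]
        rw [← add_div]
        rw [show Complex.exp (-(Complex.I * (w2 : ℂ))) - Complex.exp (-(Complex.I * (w1 : ℂ)))
            + (Complex.exp (Complex.I * (w1 : ℂ)) - Complex.exp (Complex.I * (w2 : ℂ)))
            = (Complex.exp (Complex.I * (w1 : ℂ)) - Complex.exp (-(Complex.I * (w1 : ℂ))))
            - (Complex.exp (Complex.I * (w2 : ℂ)) - Complex.exp (-(Complex.I * (w2 : ℂ))))
            from by ring]
        rw [T1, T2, T3]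
        rw [hA n, if_neg hnM]
        have s4 : Real.sin (G * ((n : ℝ) - M)) = -Real.sin w2 := by
          rw [show G * ((n : ℝ) - M) = -w2 by rw [hw2]; ring, Real.sin_neg]
        rw [s4]
        rw [hc1', hc2', hd', hw2]
        have hπC : (π : ℂ) ≠ 0 := Complex.ofReal_ne_zero.mpr Real.pi_ne_zero
        have hnMC : ((n : ℂ) - M) ≠ 0 := by
          intro hcon
          exact hnM (by exact_mod_cast sub_eq_zero.mp hcon)
        have hntC : ((n : ℂ) - t) ≠ 0 := by
          rw [show ((n : ℂ) - t) = (((n - t : ℝ)) : ℂ) by push_cast; ring]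
          exact Complex.ofReal_ne_zero.mpr (sub_ne_zero.mpr fun hcon => htk n hcon.symm)
        have hMnC : ((M : ℂ) - n) ≠ 0 := sub_ne_zero.mpr fun h => hnMC (sub_eq_zero.mpr h.symm)
        push_cast
        field_simp
        ring
    show fourierCoeff (AddCircle.liftIco (2 * π) (-π) E) n = (A n : ℂ)
    rw [fourierCoeff_liftIco_eq E n, fourierCoeffOn_eq_integral]
    simp_rw [fourier_coe_apply, smul_eq_mul]
    rw [show (-π + 2 * π - -π : ℝ) = 2 * π by ring]
    rw [show (-π + 2 * π : ℝ) = π by ring]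
    have harg : ∀ x : ℝ, Complex.exp (2 * (π : ℂ) * Complex.I * ((-n : ℤ) : ℂ) * (x : ℂ)
        / ((2 * π : ℝ) : ℂ)) = Complex.exp (cn * (x : ℂ)) := by
      intro x
      congr 1
      rw [hcn]
      have hπC : (π : ℂ) ≠ 0 := Complex.ofReal_ne_zero.mpr Real.pi_ne_zero
      push_cast
      field_simp
    simp_rw [harg]
    rw [key, Complex.real_smul]
    have hπC : (π : ℂ) ≠ 0 := Complex.ofReal_ne_zero.mpr Real.pi_ne_zero
    push_cast
    field_simp
  -- assemble
  have habs : ∀ k : ℤ, ‖(A k : ℂ) * Complex.exp (Complex.I * lam * k)‖ = |A k| := by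
    intro k
    rw [norm_mul, msE_norm1, mul_one, Complex.norm_real, Real.norm_eq_abs]
  constructor
  · exact hSum.congr fun k => (habs k).symm
  · have hS2 : Summable fun k : ℤ => (A k : ℂ) :=
      Summable.of_norm (hSum.congr fun k => by rw [Complex.norm_real, Real.norm_eq_abs])
    have hS3 : Summable (fourierCoeff (F : AddCircle (2 * π) → ℂ)) :=
      hS2.congr fun n => (hFc n).symm
    have hps := has_pointwise_sum_fourier_series_of_summable hS3 (lam : AddCircle (2 * π))
    have hlam' : lam ∈ Set.Ico (-π) (-π + 2 * π) := by
      obtain ⟨h1, h2⟩ := abs_lt.mp hlamπ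
      constructor <;> [linarith; linarith]
    have hFlam : F ((lam : ℝ) : AddCircle (2 * π)) = Complex.exp (Complex.I * lam * t) := by
      show AddCircle.liftIco (2 * π) (-π) E lam = _
      rw [AddCircle.liftIco_coe_apply hlam', hE]
      simp only [if_pos hlamG.le]
    rw [hFlam] at hps
    refine hps.congr_fun fun k => ?_
    rw [hFc k, smul_eq_mul]
    congr 1
    rw [fourier_coe_apply]
    congr 1
    have hπC : (π : ℂ) ≠ 0 := Complex.ofReal_ne_zero.mpr Real.pi_ne_zero
    push_cast
    field_simp

theorem modified_sampling_exponential (Ω : ℝ) (hΩ0 : 0 < Ω) (hΩπ : Ω < π)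
    (lam : ℝ) (hlam : |lam| ≤ Ω)
    (N : ℤ) (hN : 0 < N) (hNe : Even N) (hNΩ : (N : ℝ) > Ω / (π - Ω))
    (m : ℝ → ℤ) (hm : ∀ t : ℝ, m t = ⌊t⌋ - N)
    (g : ℝ → ℝ) (hg : ∀ t : ℝ, g t = π * N / (t - m t))
    (a : ℤ → ℝ → ℝ)
    (ha : ∀ (k : ℤ) (t : ℝ), a k t =
      if t = (k : ℝ) then 1
      else if k = m t then 1 - g t / π
      else (t - m t) * Real.sin (g t * ((k : ℝ) - m t)) /
        (π * ((k : ℝ) - m t) * ((k : ℝ) - t))) :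
    ∀ t : ℝ,
      Summable (fun k : ℤ => ‖(a k t : ℂ) * Complex.exp (Complex.I * lam * k)‖) ∧
      HasSum (fun k : ℤ => (a k t : ℂ) * Complex.exp (Complex.I * lam * k))
        (Complex.exp (Complex.I * lam * t)) := by
  intro t
  have hπ : (0 : ℝ) < π := Real.pi_pos
  have hNR : (0 : ℝ) < N := by exact_mod_cast hN
  by_cases htZ : ∃ j : ℤ, t = (j : ℝ)
  · obtain ⟨j, hj⟩ := htZ
    have hmt : m t = j - N := by rw [hm t, hj, Int.floor_intCast]
    have hgt : g t = π := by
      rw [hg t, hmt, hj]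
      rw [show (j : ℝ) - ((j - N : ℤ) : ℝ) = (N : ℝ) by push_cast; ring]
      rw [mul_div_assoc, div_self hNR.ne', mul_one]
    have hak : ∀ k : ℤ, a k t = if k = j then 1 else 0 := by
      intro k
      rcases eq_or_ne k j with hk | hk
      · subst hk; rw [ha, if_pos hj, if_pos rfl]
      · rw [ha, if_neg (fun hc : t = (k : ℝ) => hk (by exact_mod_cast hj ▸ hc : j = k).symm),
          if_neg hk]
        rcases eq_or_ne k (m t) with hk2 | hk2
        · rw [if_pos hk2, hgt, div_self hπ.ne', sub_self]
        · rw [if_neg hk2, hgt]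
          rw [show π * ((k : ℝ) - (m t : ℝ)) = ((k - m t : ℤ) : ℝ) * π by push_cast; ring,
            Real.sin_int_mul_pi, mul_zero, zero_div]
    constructor
    · apply summable_of_ne_finset_zero (s := {j})
      intro k hk
      simp only [Finset.mem_singleton] at hk
      rw [hak k, if_neg hk]
      simp
    · have heq : (fun k : ℤ => ((a k t : ℝ) : ℂ) * Complex.exp (Complex.I * lam * k))
          = fun k => if k = j then Complex.exp (Complex.I * lam * t) else 0 := by
        funext k
        rcases eq_or_ne k j with hk | hk
        · subst hk
          rw [hak, if_pos rfl, if_pos rfl, hj]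
          push_cast
          ring
        · rw [hak, if_neg hk, if_neg hk]
          simp
      rw [heq]
      exact hasSum_ite_eq j _
  · push_neg at htZ
    have htk : ∀ k : ℤ, t ≠ (k : ℝ) := htZ
    have h1 : ((⌊t⌋ : ℤ) : ℝ) < t := lt_of_le_of_ne (Int.floor_le t) ((htk ⌊t⌋).symm)
    have h2 : t < (⌊t⌋ : ℝ) + 1 := Int.lt_floor_add_one t
    have hsN : (N : ℝ) < t - ((m t : ℤ) : ℝ) := by
      rw [hm t]; push_cast; linarith
    have hsN1 : t - ((m t : ℤ) : ℝ) < (N : ℝ) + 1 := by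
      rw [hm t]; push_cast; linarith
    have hs0 : (0 : ℝ) < t - ((m t : ℤ) : ℝ) := lt_trans hNR hsN
    have hΩN : Ω < (N : ℝ) * (π - Ω) := by
      have := (div_lt_iff₀ (by linarith : (0 : ℝ) < π - Ω)).mp hNΩ
      linarith
    have hlamπ : |lam| < π := lt_of_le_of_lt hlam hΩπ
    have hlamG : |lam| < g t := by
      refine lt_of_le_of_lt hlam ?_
      rw [hg t, lt_div_iff₀ hs0]
      nlinarith
    have hA : ∀ k : ℤ, a k t = if k = m t then 1 - g t / π
        else (t - (m t : ℝ)) * Real.sin (g t * ((k : ℝ) - (m t : ℝ))) /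
          (π * ((k : ℝ) - (m t : ℝ)) * ((k : ℝ) - t)) := by
      intro k
      rw [ha k t, if_neg (htk k)]
    exact msE_hard N hN hNe t (t - ((m t : ℤ) : ℝ)) (g t) lam (m t) rfl hsN hsN1 (hg t)
      hlamG hlamπ htk (fun k => a k t) hA
end
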